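/- Let (Ω, ℱ, P) be a probability space, B_t and B_{t+h} integrable real random variables (with h ≠ 0) such that the law of (B_t, B_{t+h}) on ℝ² equals the law of (−B_t, −B_{t+h}), and let g : ℝ → ℝ be a measurable even function (g(−x) = g(x) for all x). Then E[(B_{t+h} − B_t)/h | σ(g(B_t))] = 0 almost surely; in particular, if this symmetry holds for all small h, the conditional expectations converge (to 0) as h → 0, so σ(g(B_t)) is a forward and backward differentiating σ-field with derivative 0. -/

import Mathlib

open MeasureTheory ProbabilityTheory Filter Set
open scoped Topology

noncomputable section

lemma even_sigma_field_aux {Ω : Type*} [MeasurableSpace Ω] (P : Measure Ω)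
    [IsProbabilityMeasure P] (X Y : Ω → ℝ) (hXm : Measurable X) (hYm : Measurable Y)
    (hXi : Integrable X P) (hYi : Integrable Y P)
    (hsym : P.map (fun ω => (X ω, Y ω)) = P.map (fun ω => (-X ω, -Y ω)))
    (g : ℝ → ℝ) (hgm : Measurable g) (hg : ∀ x, g (-x) = g x) (h : ℝ) :
    P[fun ω => (Y ω - X ω) / h |
      MeasurableSpace.comap (fun ω => g (X ω)) inferInstance] =ᵐ[P] 0 := by
  have hZ : Measurable (fun ω => g (X ω)) := hgm.comp hXm
  have hm : MeasurableSpace.comap (fun ω => g (X ω)) inferInstance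
      ≤ ‹MeasurableSpace Ω› := hZ.comap_le
  haveI : SigmaFinite (P.trim hm) := by
    have : IsFiniteMeasure (P.trim hm) := isFiniteMeasure_trim hm
    infer_instance
  have hint : Integrable (fun ω => (Y ω - X ω) / h) P := (hYi.sub hXi).div_const h
  refine (ae_eq_condExp_of_forall_setIntegral_eq hm hint
    (fun s _ _ => integrableOn_zero) ?_ ?_).symm
  · intro s hs _
    obtain ⟨S, hS, rfl⟩ := hs
    have hsm : MeasurableSet ((fun ω => g (X ω)) ⁻¹' S) := hZ hS
    set F : ℝ × ℝ → ℝ :=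
      fun p => S.indicator (fun _ => (1 : ℝ)) (g p.1) * ((p.2 - p.1) / h) with hF
    have hFm : Measurable F :=
      ((measurable_const.indicator hS).comp (hgm.comp measurable_fst)).mul
        ((measurable_snd.sub measurable_fst).div_const h)
    have hpair : Measurable fun ω => (X ω, Y ω) := hXm.prodMk hYm
    have hneg : Measurable fun p : ℝ × ℝ => (-p.1, -p.2) :=
      measurable_fst.neg.prodMk measurable_snd.neg
    have h1 : ∫ ω in (fun ω => g (X ω)) ⁻¹' S, (Y ω - X ω) / h ∂P
        = ∫ p, F p ∂(P.map (fun ω => (X ω, Y ω))) := by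
      rw [integral_map hpair.aemeasurable hFm.aestronglyMeasurable,
        ← integral_indicator hsm]
      congr 1
      funext ω
      by_cases hω : g (X ω) ∈ S <;> simp [hF, Set.indicator, hω]
    have hmapeq : (P.map (fun ω => (X ω, Y ω))).map (fun p : ℝ × ℝ => (-p.1, -p.2))
        = P.map (fun ω => (X ω, Y ω)) := by
      rw [Measure.map_map hneg hpair]
      have hcomp : ((fun p : ℝ × ℝ => (-p.1, -p.2)) ∘ fun ω => (X ω, Y ω))
          = fun ω => (-X ω, -Y ω) := rfl
      rw [hcomp, ← hsym]
    have hFneg : ∀ p : ℝ × ℝ, F (-p.1, -p.2) = -F p := by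
      intro p
      simp only [hF, hg]
      ring
    have h2 : ∫ p, F p ∂(P.map (fun ω => (X ω, Y ω))) = 0 := by
      have := (integral_map (μ := P.map (fun ω => (X ω, Y ω))) hneg.aemeasurable
        hFm.aestronglyMeasurable).symm
      rw [hmapeq] at this
      have heq : ∫ p : ℝ × ℝ, F ((fun q : ℝ × ℝ => (-q.1, -q.2)) p)
          ∂(P.map (fun ω => (X ω, Y ω)))
          = -∫ p, F p ∂(P.map (fun ω => (X ω, Y ω))) := by
        simp_rw [hFneg]
        exact integral_neg _
      rw [heq] at this
      linarith
    rw [h1, h2]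
    simp
  · exact StronglyMeasurable.aestronglyMeasurable
      (@stronglyMeasurable_const _ _
        (MeasurableSpace.comap (fun ω => g (X ω)) inferInstance) _ (0 : ℝ))

/-- Proposition 5(2): if the law of `(B_t, B_{t+h})` is symmetric under `(x,y) ↦ (-x,-y)`
(as holds for fractional Brownian motion) and `g` is even, then
`E[(B_{t+h} - B_t)/h | σ(g(B_t))] = 0` a.s. for every `h ≠ 0`; in particular the
conditional expectations converge (to `0`) in probability as `h ↓ 0`, both forward and
backward, so `σ(g(B_t))` is a forward and backward differentiating σ-field with
derivative `0`. -/
theorem even_sigma_field_differentiating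
    {Ω : Type*} [MeasurableSpace Ω] (P : Measure Ω) [IsProbabilityMeasure P]
    (B : ℝ → Ω → ℝ) (t : ℝ)
    (hBm : ∀ s, Measurable (B s)) (hBi : ∀ s, Integrable (B s) P)
    (hsym : ∀ h : ℝ, P.map (fun ω => (B t ω, B (t + h) ω))
      = P.map (fun ω => (-B t ω, -B (t + h) ω)))
    (g : ℝ → ℝ) (hgm : Measurable g) (hg : ∀ x, g (-x) = g x) :
    (∀ h : ℝ, h ≠ 0 →
      P[fun ω => (B (t + h) ω - B t ω) / h |
        MeasurableSpace.comap (fun ω => g (B t ω)) inferInstance] =ᵐ[P] 0) ∧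
    TendstoInMeasure P
      (fun h : ℝ => P[fun ω => (B (t + h) ω - B t ω) / h |
        MeasurableSpace.comap (fun ω => g (B t ω)) inferInstance])
      (𝓝[>] 0) (fun _ => (0 : ℝ)) ∧
    TendstoInMeasure P
      (fun h : ℝ => P[fun ω => (B t ω - B (t - h) ω) / h |
        MeasurableSpace.comap (fun ω => g (B t ω)) inferInstance])
      (𝓝[>] 0) (fun _ => (0 : ℝ)) := by
  have main : ∀ h : ℝ,
      P[fun ω => (B (t + h) ω - B t ω) / h |
        MeasurableSpace.comap (fun ω => g (B t ω)) inferInstance] =ᵐ[P] 0 :=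
    fun h => even_sigma_field_aux P (B t) (B (t + h)) (hBm t) (hBm (t + h))
      (hBi t) (hBi (t + h)) (hsym h) g hgm hg h
  have mainb : ∀ h : ℝ,
      P[fun ω => (B t ω - B (t - h) ω) / h |
        MeasurableSpace.comap (fun ω => g (B t ω)) inferInstance] =ᵐ[P] 0 := by
    intro h
    have hfun : (fun ω => (B t ω - B (t - h) ω) / h)
        = fun ω => (B (t + -h) ω - B t ω) / (-h) := by
      funext ω
      rw [sub_eq_add_neg t h, div_neg, ← neg_div, neg_sub]
    rw [hfun]
    exact main (-h)
  refine ⟨fun h _ => main h, ?_, ?_⟩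
  · intro ε hε
    refine Tendsto.congr' ?_ tendsto_const_nhds
    filter_upwards [self_mem_nhdsWithin] with h _
    symm
    refine measure_mono_null ?_ (main h)
    intro ω hω hc
    simp only [Set.mem_setOf_eq] at hω
    rw [hc] at hω
    simp at hω
    exact absurd hω hε.ne'
  · intro ε hε
    refine Tendsto.congr' ?_ tendsto_const_nhds
    filter_upwards [self_mem_nhdsWithin] with h _
    symm
    refine measure_mono_null ?_ (mainb h)
    intro ω hω hc
    simp only [Set.mem_setOf_eq] at hω
    rw [hc] at hω
    simp at hω
    exact absurd hω hε.ne'
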